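/- None of the ℤ₂-lattices ⟨-1, -2⟩, ⟨-1, 6⟩, ⟨-1, -2, -2⟩, ⟨-1, -2, 6⟩ represents any element congruent to 1 mod 8; i.e., no vector in these lattices has norm ≡ 1 (mod 8). -/
import Mathlib


open scoped Matrix BigOperators

/-- The bilinear form on `Fin n → ℤ₂` given by a Gram matrix. -/
noncomputable def bf {n : ℕ} (M : Matrix (Fin n) (Fin n) ℤ_[2]) (x y : Fin n → ℤ_[2]) : ℤ_[2] :=
  ∑ i, ∑ j, x i * M i j * y j

noncomputable abbrev f8 : ℤ_[2] →+* ZMod 8 := (PadicInt.toZModPow 3 : ℤ_[2] →+* ZMod (2^3))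

lemma f8_eight : f8 (8 : ℤ_[2]) = 0 := by
  have h : (8 : ℤ_[2]) = ((8:ℕ) : ℤ_[2]) := by norm_num
  rw [h, map_natCast]
  decide

/-- None of the ℤ₂-lattices ⟨-1,-2⟩, ⟨-1,6⟩, ⟨-1,-2,-2⟩, ⟨-1,-2,6⟩ represents any
element congruent to 1 mod 8. -/
theorem no_norm_one_mod_eight :
    (∀ x : Fin 2 → ℤ_[2], ¬ (8 : ℤ_[2]) ∣ (bf (Matrix.diagonal ![(-1:ℤ_[2]), -2]) x x - 1)) ∧
    (∀ x : Fin 2 → ℤ_[2], ¬ (8 : ℤ_[2]) ∣ (bf (Matrix.diagonal ![(-1:ℤ_[2]), 6]) x x - 1)) ∧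
    (∀ x : Fin 3 → ℤ_[2], ¬ (8 : ℤ_[2]) ∣ (bf (Matrix.diagonal ![(-1:ℤ_[2]), -2, -2]) x x - 1)) ∧
    (∀ x : Fin 3 → ℤ_[2], ¬ (8 : ℤ_[2]) ∣ (bf (Matrix.diagonal ![(-1:ℤ_[2]), -2, 6]) x x - 1)) := by
  refine ⟨?_, ?_, ?_, ?_⟩ <;>
  · rintro x ⟨c, hc⟩
    have h := congrArg f8 hc
    unfold bf at h
    simp [Fin.sum_univ_succ, Matrix.diagonal, map_sub, map_add, map_mul, map_neg, map_one,
      map_ofNat, f8_eight, (by decide : (8:ZMod 8) = 0)] at h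
    revert h
    first
    | (generalize f8 (x 0) = a
       generalize f8 (x 1) = b
       generalize f8 (x 2) = d
       revert a b d
       decide)
    | (generalize f8 (x 0) = a
       generalize f8 (x 1) = b
       revert a b
       decide)
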